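/- (Monotonicity of the u-subdifferential under the reverse Spence–Mirrlees condition.) Suppose u is continuously twice differentiable and, for each fixed y, z ↦ ∂u/∂y(y,z) is strictly decreasing, and for each fixed z, y ↦ ∂u/∂z(y,z) is strictly decreasing. Let f : D_y → ℝ, let y, ŷ ∈ D_y with y < ŷ, and suppose z ∈ ∂^u f(y) and ẑ ∈ ∂^u f(ŷ). Then z ≥ ẑ. -/

import Mathlib

open Set

/-- The `u`-dual of a real-valued function `f` on `Dy`:
`f^u(z) = sup_{y ∈ Dy} (u(y,z) - f(y))`, valued in `EReal`. -/
noncomputable def uDual (Dy : Set ℝ) (u : ℝ → ℝ → ℝ) (f : ℝ → ℝ) (z : ℝ) : EReal :=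
  ⨆ y ∈ Dy, ((u y z : EReal) - (f y : EReal))

/-- The `u`-subdifferential of `f` at `y`:
`∂^u f(y) = { z ∈ Dz : f(y) + f^u(z) = u(y,z) }`. -/
def uSubdiff (Dy Dz : Set ℝ) (u : ℝ → ℝ → ℝ) (f : ℝ → ℝ) (y : ℝ) : Set ℝ :=
  {z | z ∈ Dz ∧ (f y : EReal) + uDual Dy u f z = (u y z : EReal)}

/-- The reverse Spence–Mirrlees condition: `u` is C², `z ↦ u_y(y,z)` is strictly
decreasing on `Dz` for each `y ∈ Dy`, and `y ↦ u_z(y,z)` is strictly decreasing on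
`Dy` for each `z ∈ Dz`. -/
def ReverseSpenceMirrlees (Dy Dz : Set ℝ) (u : ℝ → ℝ → ℝ) : Prop :=
  ContDiff ℝ 2 (Function.uncurry u) ∧
  (∀ y ∈ Dy, StrictAntiOn (fun z => deriv (fun y' => u y' z) y) Dz) ∧
  (∀ z ∈ Dz, StrictAntiOn (fun y => deriv (fun z' => u y z') z) Dy)

section Aux

open Function intervalIntegral MeasureTheory

/-- key inequality: if `z ∈ ∂^u f y` then `u y' z - f y' ≤ u y z - f y` for all `y' ∈ Dy`. -/
lemma uSubdiff_key (Dy Dz : Set ℝ) (u : ℝ → ℝ → ℝ) (f : ℝ → ℝ)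
    (y : ℝ) (z : ℝ) (hz : z ∈ uSubdiff Dy Dz u f y)
    (y' : ℝ) (hy' : y' ∈ Dy) : u y' z - f y' ≤ u y z - f y := by
  obtain ⟨_, hEq⟩ := hz
  have hle : ((u y' z - f y' : ℝ) : EReal) ≤ uDual Dy u f z := by
    have : ((u y' z : EReal) - (f y' : EReal)) ≤ uDual Dy u f z :=
      le_iSup₂ (f := fun y'' (_ : y'' ∈ Dy) => ((u y'' z : EReal) - (f y'' : EReal))) y' hy'
    simpa [EReal.coe_sub] using this
  have h2 : ((f y + (u y' z - f y') : ℝ) : EReal) ≤ (u y z : EReal) := by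
    calc ((f y + (u y' z - f y') : ℝ) : EReal)
        = (f y : EReal) + ((u y' z - f y' : ℝ) : EReal) := by rw [EReal.coe_add]
      _ ≤ (f y : EReal) + uDual Dy u f z := add_le_add_right hle _
      _ = (u y z : EReal) := hEq
  have := EReal.coe_le_coe_iff.mp h2
  linarith

end Aux

/-- Antitonicity of the `u`-subdifferential under the reverse Spence–Mirrlees
condition: if `y < yh`, `z ∈ ∂^u f(y)` and `zh ∈ ∂^u f(yh)`, then `z ≥ zh`. -/
theorem uSubdiff_antitone_of_reverseSpenceMirrlees
    (Dy Dz : Set ℝ) (hDy : Dy.Nonempty) (hDz : Dz.Nonempty)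
    (hDyI : Dy.OrdConnected) (hDzI : Dz.OrdConnected)
    (u : ℝ → ℝ → ℝ) (hSM : ReverseSpenceMirrlees Dy Dz u) (f : ℝ → ℝ)
    (y yh : ℝ) (hy : y ∈ Dy) (hyh : yh ∈ Dy) (hlt : y < yh)
    (z zh : ℝ) (hz : z ∈ uSubdiff Dy Dz u f y) (hzh : zh ∈ uSubdiff Dy Dz u f yh) :
    zh ≤ z := by
  classical
  obtain ⟨hu, hSM1, _⟩ := hSM
  by_contra hcon
  push_neg at hcon
  -- hcon : z < zh
  have hzDz : z ∈ Dz := hz.1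
  have hzhDz : zh ∈ Dz := hzh.1
  have key1 : u yh z - f yh ≤ u y z - f y := uSubdiff_key Dy Dz u f y z hz yh hyh
  have key2 : u y zh - f y ≤ u yh zh - f yh := uSubdiff_key Dy Dz u f yh zh hzh y hy
  have hA : u yh z - u y z ≤ u yh zh - u y zh := by linarith
  -- partial derivative
  set pd : ℝ → ℝ → ℝ := fun s w => fderiv ℝ (Function.uncurry u) (s, w) (1, 0) with hpd
  have hdiff : Differentiable ℝ (Function.uncurry u) := hu.differentiable (by norm_num)
  have hHasDeriv : ∀ s w : ℝ, HasDerivAt (fun y' => u y' w) (pd s w) s := by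
    intro s w
    have h1 : HasDerivAt (fun s' : ℝ => (s', w)) ((1 : ℝ), (0 : ℝ)) s :=
      (hasDerivAt_id s).prodMk (hasDerivAt_const s w)
    have h2 := (hdiff (s, w)).hasFDerivAt.comp_hasDerivAt s h1
    exact h2
  have hderiv_eq : ∀ s w : ℝ, deriv (fun y' => u y' w) s = pd s w := fun s w =>
    (hHasDeriv s w).deriv
  have hpd_cont : ∀ w : ℝ, Continuous fun s => pd s w := by
    intro w
    have hf : Continuous fun s : ℝ => fderiv ℝ (Function.uncurry u) (s, w) :=
      (hu.continuous_fderiv (by norm_num)).comp (continuous_id.prodMk continuous_const)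
    exact (ContinuousLinearMap.apply ℝ ℝ ((1:ℝ), (0:ℝ))).continuous.comp hf
  have hFTC : ∀ w : ℝ, ∫ s in y..yh, pd s w = u yh w - u y w := by
    intro w
    exact intervalIntegral.integral_eq_sub_of_hasDerivAt
      (fun s _ => hHasDeriv s w) ((hpd_cont w).intervalIntegrable y yh)
  have hpos : 0 < ∫ s in y..yh, (pd s z - pd s zh) := by
    apply intervalIntegral.intervalIntegral_pos_of_pos_on
    · exact ((hpd_cont z).sub (hpd_cont zh)).intervalIntegrable y yh
    · intro s hs
      have hsDy : s ∈ Dy := hDyI.out hy hyh ⟨hs.1.le, hs.2.le⟩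
      have := hSM1 s hsDy hzDz hzhDz hcon
      simp only [hderiv_eq] at this
      linarith
    · exact hlt
  rw [intervalIntegral.integral_sub ((hpd_cont z).intervalIntegrable y yh)
    ((hpd_cont zh).intervalIntegrable y yh), hFTC, hFTC] at hpos
  linarith
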